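/- Let P be a finite set of points in the plane in convex position, let A, B ⊆ P be disjoint nonempty subsets, and let a₀ ∈ A and b₀ ∈ B. If A and B are not line-separable, then there exist points a ∈ A and b ∈ B such that the closed segments [a₀, a] and [b₀, b] intersect (cross each other). -/

import Mathlib

noncomputable section

/-- The plane ℝ². -/
abbrev Plane : Type := EuclideanSpace ℝ (Fin 2)

/-- A finite point set is in convex position if every point of it is an extreme point
(vertex) of its convex hull, i.e. no point lies in the convex hull of the others. -/
def ConvexPos (P : Finset Plane) : Prop :=
  ∀ q ∈ P, q ∉ convexHull ℝ ((P : Set Plane) \ {q})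

/-- Two point sets `A` and `B` are line-separable: there is a nonzero linear functional
`u` and a constant `c` with `u ≤ c` on `A` and `u ≥ c` on `B`. -/
def LineSep (A B : Set Plane) : Prop :=
  ∃ u : Plane →ₗ[ℝ] ℝ, u ≠ 0 ∧ ∃ c : ℝ, (∀ a ∈ A, u a ≤ c) ∧ (∀ b ∈ B, c ≤ u b)

/-! ### Auxiliary machinery: signed areas in the plane -/

namespace SegCross

/-- Twice the signed area of the triangle `p q w`. -/
def dmat (p q w : Plane) : ℝ :=
  (q 0 - p 0) * (w 1 - p 1) - (q 1 - p 1) * (w 0 - p 0)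

lemma dmat_self_left (p q : Plane) : dmat p q p = 0 := by simp [dmat]

lemma dmat_self_right (p q : Plane) : dmat p q q = 0 := by simp [dmat]; ring

lemma dmat_degenerate (p w : Plane) : dmat p p w = 0 := by simp [dmat]

lemma dmat_cyc (p q r : Plane) : dmat p q r = dmat q r p := by simp [dmat]; ring

lemma dmat_swap (p q w : Plane) : dmat p q w = - dmat q p w := by simp [dmat]; ring

lemma dmat_swap23 (p q w : Plane) : dmat p q w = - dmat p w q := by simp [dmat]; ring

/-- The linear part of `dmat p q`. -/
def dlin (p q : Plane) : Plane →ₗ[ℝ] ℝ where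
  toFun w := (q 0 - p 0) * w 1 - (q 1 - p 1) * w 0
  map_add' y z := by simp [PiLp.add_apply]; ring
  map_smul' c y := by simp [PiLp.smul_apply, smul_eq_mul]; ring

lemma dmat_eq_dlin (p q w : Plane) :
    dmat p q w = dlin p q w + ((q 1 - p 1) * p 0 - (q 0 - p 0) * p 1) := by
  simp [dmat, dlin]; ring

/-- `dmat p q` commutes with affine combinations. -/
lemma dmat_sum (p q : Plane) (B : Finset Plane) (w : Plane → ℝ)
    (hw : ∑ y ∈ B, w y = 1) :
    dmat p q (∑ y ∈ B, w y • y) = ∑ y ∈ B, w y * dmat p q y := by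
  set C : ℝ := (q 1 - p 1) * p 0 - (q 0 - p 0) * p 1 with hC
  have h1 : dmat p q (∑ y ∈ B, w y • y) = (∑ y ∈ B, w y * dlin p q y) + C := by
    rw [dmat_eq_dlin, map_sum]
    congr 1
    refine Finset.sum_congr rfl fun y _ => ?_
    rw [map_smul, smul_eq_mul]
  have h2 : ∑ y ∈ B, w y * dmat p q y = (∑ y ∈ B, w y * dlin p q y) + C := by
    have hterm : ∀ y ∈ B, w y * dmat p q y = w y * dlin p q y + w y * C := by
      intro y _; rw [dmat_eq_dlin]; ring
    rw [Finset.sum_congr rfl hterm, Finset.sum_add_distrib, ← Finset.sum_mul, hw, one_mul]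
  rw [h1, h2]

lemma dmat_combo2 (p q y z : Plane) {a b : ℝ} (hab : a + b = 1) :
    dmat p q (a • y + b • z) = a * dmat p q y + b * dmat p q z := by
  have hb : b = 1 - a := by linarith
  subst hb
  simp [dmat, PiLp.add_apply, PiLp.smul_apply, smul_eq_mul]
  ring

lemma dmat_combo3 (p q u v w : Plane) {c₀ c₁ c₂ : ℝ} (hs : c₀ + c₁ + c₂ = 1) :
    dmat p q (c₀ • u + c₁ • v + c₂ • w) =
      c₀ * dmat p q u + c₁ * dmat p q v + c₂ * dmat p q w := by
  have hc : c₂ = 1 - c₀ - c₁ := by linarith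
  subst hc
  simp [dmat, PiLp.add_apply, PiLp.smul_apply, smul_eq_mul]
  ring

/-- Cramer identity: barycentric coordinates, scalar form. -/
lemma cramer_sum (p q r w : Plane) :
    dmat q r w + dmat r p w + dmat p q w = dmat p q r := by
  simp [dmat]; ring

/-- Cramer identity: barycentric coordinates, vector form. -/
lemma cramer_vec (p q r w : Plane) :
    dmat q r w • p + dmat r p w • q + dmat p q w • r = dmat p q r • w := by
  apply PiLp.ext
  intro i
  simp only [PiLp.add_apply, PiLp.smul_apply, smul_eq_mul]
  fin_cases i <;> · simp [dmat]; ring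

/-- If `dmat p q m = 0` with `p ≠ q` then `m` is on the line through `p, q`. -/
lemma exists_t {p q m : Plane} (hpq : p ≠ q) (h : dmat p q m = 0) :
    ∃ t : ℝ, m = p + t • (q - p) := by
  have hne : q 0 ≠ p 0 ∨ q 1 ≠ p 1 := by
    by_contra hc
    push_neg at hc
    exact hpq (PiLp.ext fun i => by fin_cases i <;> simp [hc.1, hc.2]).symm
  rcases hne with h0 | h1
  · refine ⟨(m 0 - p 0) / (q 0 - p 0), PiLp.ext fun i => ?_⟩
    have hd : q 0 - p 0 ≠ 0 := sub_ne_zero.mpr h0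
    have h' : (q 0 - p 0) * (m 1 - p 1) = (q 1 - p 1) * (m 0 - p 0) := by
      simp only [dmat] at h; linarith
    fin_cases i <;>
      simp only [PiLp.add_apply, PiLp.smul_apply, PiLp.sub_apply, smul_eq_mul, Fin.zero_eta, Fin.mk_one]
    · field_simp
      ring
    · field_simp
      linear_combination h'
  · refine ⟨(m 1 - p 1) / (q 1 - p 1), PiLp.ext fun i => ?_⟩
    have hd : q 1 - p 1 ≠ 0 := sub_ne_zero.mpr h1
    have h' : (q 0 - p 0) * (m 1 - p 1) = (q 1 - p 1) * (m 0 - p 0) := by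
      simp only [dmat] at h; linarith
    fin_cases i <;>
      simp only [PiLp.add_apply, PiLp.smul_apply, PiLp.sub_apply, smul_eq_mul, Fin.zero_eta, Fin.mk_one]
    · field_simp
      linear_combination -h'
    · field_simp
      ring

/-- Trichotomy for three collinear points. -/
lemma resolve {p q m : Plane} (hpq : p ≠ q) (h : dmat p q m = 0) :
    m ∈ segment ℝ p q ∨ p ∈ segment ℝ m q ∨ q ∈ segment ℝ p m := by
  obtain ⟨t, rfl⟩ := exists_t hpq h
  rcases le_or_gt 0 t with ht0 | ht0
  · rcases le_or_gt t 1 with ht1 | ht1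
    · left
      exact ⟨1 - t, t, by linarith, ht0, by ring, by module⟩
    · right; right
      have ht : (0:ℝ) < t := by linarith
      refine ⟨1 - 1/t, 1/t, ?_, by positivity, by ring, ?_⟩
      · have h1 : 1/t ≤ 1 := by
          rw [div_le_one ht]; linarith
        linarith
      · match_scalars <;> field_simp <;> try ring
  · right; left
    have h1t : (0:ℝ) < 1 - t := by linarith
    refine ⟨1/(1-t), -t/(1-t), by positivity,
      div_nonneg (by linarith) (by linarith), ?_, ?_⟩
    · field_simp
      ring
    · match_scalars <;> field_simp <;> try ring

/-- Putting a convex combination of three points in the convex hull. -/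
lemma mem3 (u v w : Plane) (c₀ c₁ c₂ : ℝ) (h0 : 0 ≤ c₀) (h1 : 0 ≤ c₁) (h2 : 0 ≤ c₂)
    (hsum : c₀ + c₁ + c₂ = 1) :
    c₀ • u + c₁ • v + c₂ • w ∈ convexHull ℝ ({u, v, w} : Set Plane) := by
  have huv : u ∈ ({u, v, w} : Set Plane) := by simp
  have hvv : v ∈ ({u, v, w} : Set Plane) := by simp
  have hww : w ∈ ({u, v, w} : Set Plane) := by simp
  rcases eq_or_lt_of_le (by positivity : (0:ℝ) ≤ c₁ + c₂) with hz | hz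
  · have hc1 : c₁ = 0 := by linarith
    have hc2 : c₂ = 0 := by linarith
    have hc0 : c₀ = 1 := by linarith
    simp only [hc1, hc2, hc0, one_smul, zero_smul, add_zero]
    exact subset_convexHull ℝ _ huv
  · have hzq : (c₁/(c₁+c₂)) • v + (c₂/(c₁+c₂)) • w ∈ convexHull ℝ ({u,v,w} : Set Plane) :=
      (convex_convexHull ℝ _) (subset_convexHull ℝ _ hvv) (subset_convexHull ℝ _ hww)
        (div_nonneg h1 hz.le) (div_nonneg h2 hz.le) (by field_simp)
    have hmem := (convex_convexHull ℝ _) (subset_convexHull ℝ _ huv) hzq h0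
      (le_of_lt hz) (by linarith)
    have heq : c₀ • u + (c₁+c₂) • ((c₁/(c₁+c₂)) • v + (c₂/(c₁+c₂)) • w)
        = c₀ • u + c₁ • v + c₂ • w := by
      match_scalars <;> field_simp
    rwa [heq] at hmem

/-- Extracting a convex combination from membership in the hull of three points. -/
lemma hull3_extract {u v w x : Plane} (hx : x ∈ convexHull ℝ ({u, v, w} : Set Plane)) :
    ∃ c₀ c₁ c₂ : ℝ, 0 ≤ c₀ ∧ 0 ≤ c₁ ∧ 0 ≤ c₂ ∧ c₀ + c₁ + c₂ = 1 ∧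
      x = c₀ • u + c₁ • v + c₂ • w := by
  rw [show ({u, v, w} : Set Plane) = insert u {v, w} from rfl,
    convexHull_insert ⟨v, by simp⟩, mem_convexJoin] at hx
  obtain ⟨a, ha, z, hz, hseg⟩ := hx
  rw [Set.mem_singleton_iff] at ha
  subst ha
  rw [convexHull_pair] at hz
  obtain ⟨e, f, he, hf, hef, rfl⟩ := hz
  obtain ⟨c, d, hc, hd, hcd, hx⟩ := hseg
  refine ⟨c, d * e, d * f, hc, by positivity, by positivity, by nlinarith, ?_⟩
  rw [← hx]
  module

/-- The convex hull of three points lies in a (closed) halfplane containing them. -/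
lemma halfplane {p q u v w x : Plane} (hu : 0 ≤ dmat p q u) (hv : 0 ≤ dmat p q v)
    (hw : 0 ≤ dmat p q w) (hx : x ∈ convexHull ℝ ({u, v, w} : Set Plane)) :
    0 ≤ dmat p q x := by
  obtain ⟨c₀, c₁, c₂, h0, h1, h2, hs, rfl⟩ := hull3_extract hx
  rw [dmat_combo3 p q u v w hs]
  exact add_nonneg (add_nonneg (mul_nonneg h0 hu) (mul_nonneg h1 hv)) (mul_nonneg h2 hw)

/-- Cramer / barycentric membership criterion for a (positively oriented) triangle. -/
lemma mem_hull3_of_dmat {p q r w : Plane} (hσ : 0 < dmat p q r)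
    (h₁ : 0 ≤ dmat q r w) (h₂ : 0 ≤ dmat r p w) (h₃ : 0 ≤ dmat p q w) :
    w ∈ convexHull ℝ ({p, q, r} : Set Plane) := by
  have hσ' : dmat p q r ≠ 0 := ne_of_gt hσ
  have hmem := mem3 p q r (dmat q r w / dmat p q r) (dmat r p w / dmat p q r)
      (dmat p q w / dmat p q r) (div_nonneg h₁ hσ.le) (div_nonneg h₂ hσ.le)
      (div_nonneg h₃ hσ.le) (by field_simp; linarith [cramer_sum p q r w])
  have heq : (dmat q r w / dmat p q r) • p + (dmat r p w / dmat p q r) • q +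
      (dmat p q w / dmat p q r) • r = w := by
    apply smul_right_injective Plane hσ'
    calc dmat p q r • ((dmat q r w / dmat p q r) • p + (dmat r p w / dmat p q r) • q +
          (dmat p q w / dmat p q r) • r)
        = dmat q r w • p + dmat r p w • q + dmat p q w • r := by
          match_scalars <;> field_simp
      _ = dmat p q r • w := cramer_vec p q r w
  rwa [heq] at hmem

/-- Coefficient-shifting: move mass until some coefficient hits zero. -/
lemma shift3 (α c : Fin 3 → ℝ) (hα : ∀ i, 0 ≤ α i) (hneg : ∃ i, c i < 0) :
    ∃ t : ℝ, 0 ≤ t ∧ (∀ i, 0 ≤ α i + t * c i) ∧ ∃ j, (α j + t * c j = 0 ∧ c j < 0) := by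
  classical
  set S := Finset.univ.filter (fun i => c i < 0) with hS
  have hSne : S.Nonempty := by
    obtain ⟨i, hi⟩ := hneg; exact ⟨i, by simp [hS, hi]⟩
  obtain ⟨j, hjS, hjmin⟩ := S.exists_min_image (fun i => α i / (-c i)) hSne
  have hcj : c j < 0 := by simpa [hS] using hjS
  have hcj' : (0:ℝ) < -c j := by linarith
  refine ⟨α j / (-c j), div_nonneg (hα j) hcj'.le, ?_, j, ?_, hcj⟩
  · intro i
    rcases lt_or_ge (c i) 0 with hci | hci
    · have hle := hjmin i (by simp [hS, hci])
      have hci' : (0:ℝ) < -c i := by linarith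
      have key := (div_le_div_iff₀ hcj' hci').mp hle
      have ht : (α j / (-c j)) * (-c j) = α j := div_mul_cancel₀ _ (ne_of_gt hcj')
      nlinarith [ht, key]
    · exact add_nonneg (hα i) (mul_nonneg (div_nonneg (hα j) hcj'.le) hci)
  · have hcj0 : c j ≠ 0 := ne_of_lt hcj
    have hkey : α j / -c j * c j = -(α j) := by
      rw [div_neg, neg_mul, div_mul_cancel₀ _ hcj0]
    linarith

/-- Core of the fan lemma: shifting a convex combination along an affine dependence. -/
lemma fan3_core {v p q r x : Plane} {c₁ c₂ c₃ cv : ℝ}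
    (hdep : c₁ • p + c₂ • q + c₃ • r + cv • v = 0)
    (hsumc : c₁ + c₂ + c₃ + cv = 0) (hcv : 0 ≤ cv)
    (hneg : c₁ < 0 ∨ c₂ < 0 ∨ c₃ < 0)
    (hx : x ∈ convexHull ℝ ({p, q, r} : Set Plane)) :
    x ∈ convexHull ℝ ({v, p, q} : Set Plane) ∨ x ∈ convexHull ℝ ({v, q, r} : Set Plane) ∨
      x ∈ convexHull ℝ ({v, p, r} : Set Plane) := by
  obtain ⟨α₀, α₁, α₂, h0, h1, h2, hs, rfl⟩ := hull3_extract hx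
  have hα : ∀ i : Fin 3, 0 ≤ (![α₀, α₁, α₂]) i := by
    intro i; fin_cases i <;> simpa
  have hneg' : ∃ i : Fin 3, (![c₁, c₂, c₃]) i < 0 := by
    rcases hneg with h | h | h
    exacts [⟨0, by simpa⟩, ⟨1, by simpa⟩, ⟨2, by simpa⟩]
  obtain ⟨t, ht0, hbound, j, hj0, _⟩ := shift3 ![α₀, α₁, α₂] ![c₁, c₂, c₃] hα hneg'
  have hb0 : 0 ≤ α₀ + t * c₁ := by simpa using hbound 0
  have hb1 : 0 ≤ α₁ + t * c₂ := by simpa using hbound 1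
  have hb2 : 0 ≤ α₂ + t * c₃ := by simpa using hbound 2
  have hcv' : 0 ≤ t * cv := mul_nonneg ht0 hcv
  have hts : t * c₁ + t * c₂ + t * c₃ + t * cv = 0 := by
    have : t * (c₁ + c₂ + c₃ + cv) = 0 := by rw [hsumc, mul_zero]
    linarith [this]
  fin_cases j
  · -- coefficient of p vanishes:  x ∈ convexHull {v, q, r}
    right; left
    have hj : α₀ + t * c₁ = 0 := by simpa using hj0
    have hxeq : (t*cv) • v + (α₁ + t*c₂) • q + (α₂ + t*c₃) • r
        = α₀ • p + α₁ • q + α₂ • r := by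
      have expand : (t*cv) • v + (α₁ + t*c₂) • q + (α₂ + t*c₃) • r
          = (α₀ • p + α₁ • q + α₂ • r) + t • (c₁ • p + c₂ • q + c₃ • r + cv • v)
            + (-(α₀ + t * c₁)) • p := by module
      rw [expand, hdep, smul_zero, add_zero, hj, neg_zero, zero_smul, add_zero]
    rw [← hxeq]
    exact mem3 v q r _ _ _ hcv' hb1 hb2 (by linarith)
  · -- coefficient of q vanishes:  x ∈ convexHull {v, p, r}
    right; right
    have hj : α₁ + t * c₂ = 0 := by simpa using hj0
    have hxeq : (t*cv) • v + (α₀ + t*c₁) • p + (α₂ + t*c₃) • r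
        = α₀ • p + α₁ • q + α₂ • r := by
      have expand : (t*cv) • v + (α₀ + t*c₁) • p + (α₂ + t*c₃) • r
          = (α₀ • p + α₁ • q + α₂ • r) + t • (c₁ • p + c₂ • q + c₃ • r + cv • v)
            + (-(α₁ + t * c₂)) • q := by module
      rw [expand, hdep, smul_zero, add_zero, hj, neg_zero, zero_smul, add_zero]
    rw [← hxeq]
    exact mem3 v p r _ _ _ hcv' hb0 hb2 (by linarith)
  · -- coefficient of r vanishes:  x ∈ convexHull {v, p, q}
    left
    have hj : α₂ + t * c₃ = 0 := by simpa using hj0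
    have hxeq : (t*cv) • v + (α₀ + t*c₁) • p + (α₁ + t*c₂) • q
        = α₀ • p + α₁ • q + α₂ • r := by
      have expand : (t*cv) • v + (α₀ + t*c₁) • p + (α₁ + t*c₂) • q
          = (α₀ • p + α₁ • q + α₂ • r) + t • (c₁ • p + c₂ • q + c₃ • r + cv • v)
            + (-(α₂ + t * c₃)) • r := by module
      rw [expand, hdep, smul_zero, add_zero, hj, neg_zero, zero_smul, add_zero]
    rw [← hxeq]
    exact mem3 v p q _ _ _ hcv' hb0 hb1 (by linarith)

/-- Fan lemma for a nondegenerate triangle: the three triangles with apex `v` over the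
edges of `p q r` cover the triangle `p q r`. -/
lemma fan3 {p q r v x : Plane} (hσ : dmat p q r ≠ 0)
    (hx : x ∈ convexHull ℝ ({p, q, r} : Set Plane)) :
    x ∈ convexHull ℝ ({v, p, q} : Set Plane) ∨ x ∈ convexHull ℝ ({v, q, r} : Set Plane) ∨
      x ∈ convexHull ℝ ({v, p, r} : Set Plane) := by
  rcases hσ.lt_or_gt with h | h
  · refine fan3_core (c₁ := dmat q r v) (c₂ := dmat r p v) (c₃ := dmat p q v)
      (cv := -(dmat p q r)) ?_ ?_ (by linarith) ?_ hx
    · rw [cramer_vec p q r v, neg_smul, add_neg_cancel]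
    · linarith [cramer_sum p q r v]
    · by_contra hcon
      push_neg at hcon
      obtain ⟨e1, e2, e3⟩ := hcon
      linarith [cramer_sum p q r v]
  · refine fan3_core (c₁ := -dmat q r v) (c₂ := -dmat r p v) (c₃ := -dmat p q v)
      (cv := dmat p q r) ?_ ?_ h.le ?_ hx
    · have hcv := cramer_vec p q r v
      have : -dmat q r v • p + -dmat r p v • q + -dmat p q v • r + dmat p q r • v
          = dmat p q r • v - (dmat q r v • p + dmat r p v • q + dmat p q v • r) := by
        module
      rw [this, hcv, sub_self]
    · linarith [cramer_sum p q r v]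
    · by_contra hcon
      push_neg at hcon
      obtain ⟨e1, e2, e3⟩ := hcon
      linarith [cramer_sum p q r v]

end SegCross

open SegCross

lemma mem_diff_hull {P : Finset Plane} {z y : Plane} (hz : z ∈ P) (hzy : z ≠ y) :
    z ∈ ((P : Set Plane) \ {y}) :=
  ⟨hz, by simp [hzy]⟩

/-- No three distinct points of a set in convex position are collinear. -/
lemma dmat_ne_zero {P : Finset Plane} (hP : ConvexPos P) {p q r : Plane}
    (hp : p ∈ P) (hq : q ∈ P) (hr : r ∈ P)
    (hpq : p ≠ q) (hpr : p ≠ r) (hqr : q ≠ r) : dmat p q r ≠ 0 := by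
  intro h0
  have mem : ∀ z w : Plane, z ∈ P → w ∈ P → ∀ y : Plane, z ≠ y → w ≠ y →
      ∀ m : Plane, m ∈ segment ℝ z w → m ∈ convexHull ℝ ((P : Set Plane) \ {y}) := by
    intro z w hz hw y hzy hwy m hm
    exact (convex_convexHull ℝ _).segment_subset
      (subset_convexHull ℝ _ (mem_diff_hull hz hzy))
      (subset_convexHull ℝ _ (mem_diff_hull hw hwy)) hm
  rcases resolve hpq h0 with hm | hm | hm
  · exact hP r hr (mem p q hp hq r hpr hqr r hm)
  · exact hP p hp (mem r q hr hq p (Ne.symm hpr) (Ne.symm hpq) p hm)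
  · exact hP q hq (mem p r hp hr q hpq (Ne.symm hqr) q hm)

/-- Core of the crossing lemma with a fixed sign arrangement. -/
lemma segs_cross_core {P : Finset Plane} (hP : ConvexPos P) {p q r s : Plane}
    (hp : p ∈ P) (hq : q ∈ P) (hr : r ∈ P) (hs : s ∈ P)
    (hDr : 0 < dmat p q r) (hDs : dmat p q s < 0) :
    (segment ℝ p q ∩ segment ℝ r s).Nonempty := by
  have hpq : p ≠ q := by
    intro he; rw [he, dmat_degenerate] at hDr; exact lt_irrefl 0 hDr
  have hpr : p ≠ r := fun he => by
    rw [← he, dmat_self_left] at hDr; exact lt_irrefl 0 hDr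
  have hps : p ≠ s := fun he => by
    rw [← he, dmat_self_left] at hDs; exact lt_irrefl 0 hDs
  have hqr : q ≠ r := fun he => by
    rw [← he, dmat_self_right] at hDr; exact lt_irrefl 0 hDr
  have hqs : q ≠ s := fun he => by
    rw [← he, dmat_self_right] at hDs; exact lt_irrefl 0 hDs
  have hden : (0:ℝ) < dmat p q r - dmat p q s := by linarith
  set a : ℝ := -dmat p q s / (dmat p q r - dmat p q s) with ha_def
  set b : ℝ := dmat p q r / (dmat p q r - dmat p q s) with hb_def
  have ha : 0 ≤ a := div_nonneg (by linarith) hden.le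
  have hb : 0 ≤ b := div_nonneg hDr.le hden.le
  have hab : a + b = 1 := by rw [ha_def, hb_def]; field_simp; ring
  set m : Plane := a • r + b • s with hm_def
  have hm_rs : m ∈ segment ℝ r s := ⟨a, b, ha, hb, hab, rfl⟩
  have hdm : dmat p q m = 0 := by
    rw [hm_def, dmat_combo2 p q r s hab, ha_def, hb_def]
    field_simp
    ring
  have hmemP : ∀ y : Plane, y ≠ r → y ≠ s → m ∈ convexHull ℝ ((P : Set Plane) \ {y}) := by
    intro y hyr hys
    exact (convex_convexHull ℝ _).segment_subset
      (subset_convexHull ℝ _ (mem_diff_hull hr (Ne.symm hyr)))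
      (subset_convexHull ℝ _ (mem_diff_hull hs (Ne.symm hys))) hm_rs
  rcases resolve hpq hdm with h1 | h1 | h1
  · exact ⟨m, h1, hm_rs⟩
  · exfalso
    have hqP : q ∈ convexHull ℝ ((P : Set Plane) \ {p}) :=
      subset_convexHull ℝ _ (mem_diff_hull hq (Ne.symm hpq))
    exact hP p hp ((convex_convexHull ℝ _).segment_subset
      (hmemP p hpr hps) hqP h1)
  · exfalso
    have hpP : p ∈ convexHull ℝ ((P : Set Plane) \ {q}) :=
      subset_convexHull ℝ _ (mem_diff_hull hp hpq)
    exact hP q hq ((convex_convexHull ℝ _).segment_subset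
      hpP (hmemP q hqr hqs) h1)

/-- Key crossing lemma: for points of a convex-position set, if `r` and `s` lie strictly on
opposite sides of the line through `p, q`, then the segments `[p,q]` and `[r,s]` meet. -/
lemma segs_cross {P : Finset Plane} (hP : ConvexPos P) {p q r s : Plane}
    (hp : p ∈ P) (hq : q ∈ P) (hr : r ∈ P) (hs : s ∈ P)
    (hlt : dmat p q r * dmat p q s < 0) :
    (segment ℝ p q ∩ segment ℝ r s).Nonempty := by
  rcases mul_neg_iff.mp hlt with ⟨h1, h2⟩ | ⟨h1, h2⟩
  · exact segs_cross_core hP hp hq hr hs h1 h2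
  · obtain ⟨m, hm1, hm2⟩ := segs_cross_core hP hp hq hs hr h2 h1
    exact ⟨m, hm1, segment_symm ℝ s r ▸ hm2⟩

/-- Strict sign of `dmat` on points transfers to the convex hull. -/
lemma dmat_pos_hull {B : Finset Plane} {p q x : Plane}
    (hx : x ∈ convexHull ℝ (B : Set Plane)) (hb : ∀ b ∈ B, 0 < dmat p q b) :
    0 < dmat p q x := by
  rw [Finset.convexHull_eq] at hx
  obtain ⟨w, hw0, hw1, hwx⟩ := hx
  rw [Finset.centerMass_eq_of_sum_1 _ _ hw1] at hwx
  simp only [id] at hwx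
  have hx' : dmat p q x = ∑ y ∈ B, w y * dmat p q y := by
    rw [← hwx, dmat_sum p q B w hw1]
  rw [hx']
  have hex : ∃ y ∈ B, 0 < w y := by
    by_contra hc
    push_neg at hc
    have : ∑ y ∈ B, w y ≤ 0 := Finset.sum_nonpos fun y hy => hc y hy
    linarith
  obtain ⟨y, hy, hwy⟩ := hex
  exact Finset.sum_pos' (fun i hi => mul_nonneg (hw0 i hi) (hb i hi).le)
    ⟨y, hy, mul_pos hwy (hb y hy)⟩

/-- `dmat p q` vanishes on the segment `[p, q]`. -/
lemma seg_dmat_zero {p q x : Plane} (hx : x ∈ segment ℝ p q) : dmat p q x = 0 := by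
  obtain ⟨a, b, _, _, hab, rfl⟩ := hx
  rw [dmat_combo2 p q p q hab, dmat_self_left, dmat_self_right]
  ring

/-- Fan/Carathéodory lemma with a prescribed apex `a₀ ∈ A`. -/
lemma fan {P A : Finset Plane} (hP : ConvexPos P) (hA : A ⊆ P) {a₀ : Plane} (_ : a₀ ∈ A)
    {x : Plane} (hx : x ∈ convexHull ℝ (A : Set Plane)) :
    ∃ a₁ ∈ A, ∃ a₂ ∈ A, x ∈ convexHull ℝ ({a₀, a₁, a₂} : Set Plane) := by
  classical
  rw [convexHull_eq_union] at hx
  simp only [Set.mem_iUnion] at hx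
  obtain ⟨T, hTA, hTind, hxT⟩ := hx
  have hTP : ∀ z ∈ T, z ∈ A := fun z hz => hTA hz
  have hcard : T.card ≤ 3 := by
    have h1 := hTind.card_le_finrank_succ
    rw [Fintype.card_coe] at h1
    have h2 : Module.finrank ℝ (vectorSpan ℝ (Set.range ((↑) : ↑T → Plane))) ≤ 2 := by
      have h3 := Submodule.finrank_le (vectorSpan ℝ (Set.range ((↑) : ↑T → Plane)))
      simpa [finrank_euclideanSpace_fin] using h3
    omega
  have hc : T.card = 0 ∨ T.card = 1 ∨ T.card = 2 ∨ T.card = 3 := by omega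
  rcases hc with hc | hc | hc | hc
  · rw [Finset.card_eq_zero] at hc
    subst hc
    simp at hxT
  · obtain ⟨a, rfl⟩ := Finset.card_eq_one.mp hc
    have hxa : x = a := by simpa using hxT
    subst hxa
    exact ⟨x, hTP x (by simp), x, hTP x (by simp),
      subset_convexHull ℝ _ (by simp)⟩
  · obtain ⟨u, w, hne, hTe⟩ := Finset.card_eq_two.mp hc
    rw [hTe] at hxT hTP
    have hu : u ∈ A := hTP u (by simp)
    have hw : w ∈ A := hTP w (by simp)
    have hcoe : (({u, w} : Finset Plane) : Set Plane) = ({u, w} : Set Plane) := by simp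
    rw [hcoe] at hxT
    refine ⟨u, hu, w, hw, convexHull_mono ?_ hxT⟩
    intro z hz
    simp only [Set.mem_insert_iff, Set.mem_singleton_iff] at hz ⊢
    tauto
  · obtain ⟨u, v', w, h12, h13, h23, hTe⟩ := Finset.card_eq_three.mp hc
    rw [hTe] at hxT hTP
    have hu : u ∈ A := hTP u (by simp)
    have hv : v' ∈ A := hTP v' (by simp)
    have hw : w ∈ A := hTP w (by simp)
    have hcoe : (({u, v', w} : Finset Plane) : Set Plane) = ({u, v', w} : Set Plane) := by simp
    have hxT' : x ∈ convexHull ℝ ({u, v', w} : Set Plane) := by rw [← hcoe]; exact hxT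
    by_cases e1 : a₀ = u
    · subst e1; exact ⟨v', hv, w, hw, hxT'⟩
    by_cases e2 : a₀ = v'
    · subst e2
      refine ⟨u, hu, w, hw, ?_⟩
      rwa [Set.insert_comm] at hxT'
    by_cases e3 : a₀ = w
    · subst e3
      refine ⟨u, hu, v', hv, ?_⟩
      rwa [show ({u, v', a₀} : Set Plane) = {a₀, u, v'} by
        ext z; simp only [Set.mem_insert_iff, Set.mem_singleton_iff]; tauto] at hxT'
    have hσ : dmat u v' w ≠ 0 :=
      dmat_ne_zero hP (hA hu) (hA hv) (hA hw) h12 h13 h23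
    rcases fan3 (v := a₀) hσ hxT' with h | h | h
    · exact ⟨u, hu, v', hv, h⟩
    · exact ⟨v', hv, w, hw, h⟩
    · exact ⟨u, hu, w, hw, h⟩

/-- The degenerate case: `x` on a segment `[a₀, a]` and in the hull of `B` is impossible. -/
lemma no_seg_case {P A B : Finset Plane} (hP : ConvexPos P) (hA : A ⊆ P) (hB : B ⊆ P)
    (hAB : Disjoint A B) {a₀ a x : Plane} {b₀ : Plane} (ha₀ : a₀ ∈ A) (ha : a ∈ A)
    (hb₀ : b₀ ∈ B)
    (hsame : ∀ a' ∈ A, a' ≠ a₀ → ∀ b ∈ B, 0 < dmat a₀ a' b₀ * dmat a₀ a' b)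
    (hxB : x ∈ convexHull ℝ (B : Set Plane)) (hxseg : x ∈ segment ℝ a₀ a) : False := by
  by_cases haa : a = a₀
  · rw [haa] at hxseg
    have hx0 : x = a₀ := by simpa [segment_same] using hxseg
    subst hx0
    refine hP x (hA ha₀) (convexHull_mono ?_ hxB)
    intro b hb
    have hba : b ≠ x := fun h => Finset.disjoint_left.mp hAB ha₀ (h ▸ hb)
    exact mem_diff_hull (hB hb) hba
  · have h0 : dmat a₀ a x = 0 := seg_dmat_zero hxseg
    rcases lt_trichotomy (dmat a₀ a b₀) 0 with hs | hs | hs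
    · have hpos : ∀ b ∈ B, 0 < dmat a a₀ b := by
        intro b hb
        nlinarith [hsame a ha haa b hb, dmat_swap a₀ a b]
      have := dmat_pos_hull hxB hpos
      nlinarith [dmat_swap a₀ a x]
    · nlinarith [hsame a ha haa b₀ hb₀]
    · have hpos : ∀ b ∈ B, 0 < dmat a₀ a b := fun b hb => by
        nlinarith [hsame a ha haa b hb]
      have := dmat_pos_hull hxB hpos
      linarith

/-- The main nondegenerate case. -/
lemma main_case {P A B : Finset Plane} (hP : ConvexPos P) (hA : A ⊆ P) (hB : B ⊆ P)
    (hAB : Disjoint A B) {a₀ a₁ a₂ x : Plane} {b₀ : Plane}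
    (ha₀ : a₀ ∈ A) (ha₁ : a₁ ∈ A) (ha₂ : a₂ ∈ A) (hb₀ : b₀ ∈ B)
    (h01 : a₁ ≠ a₀) (h02 : a₂ ≠ a₀)
    (hσ : 0 < dmat a₀ a₁ a₂)
    (hsame : ∀ a' ∈ A, a' ≠ a₀ → ∀ b ∈ B, 0 < dmat a₀ a' b₀ * dmat a₀ a' b)
    (hxB : x ∈ convexHull ℝ (B : Set Plane))
    (hxT : x ∈ convexHull ℝ ({a₀, a₁, a₂} : Set Plane)) : False := by
  have hx1 : 0 ≤ dmat a₀ a₁ x :=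
    halfplane (by simp [dmat_self_left]) (by simp [dmat_self_right]) hσ.le hxT
  have hx2 : 0 ≤ dmat a₂ a₀ x :=
    halfplane (by simp [dmat_self_right])
      (by rw [dmat_cyc]; exact hσ.le) (by simp [dmat_self_left]) hxT
  have hx3 : 0 ≤ dmat a₁ a₂ x :=
    halfplane (by rw [dmat_cyc, dmat_cyc]; exact hσ.le)
      (by simp [dmat_self_left]) (by simp [dmat_self_right]) hxT
  have hb1 : ∀ b ∈ B, 0 < dmat a₀ a₁ b := by
    rcases lt_trichotomy (dmat a₀ a₁ b₀) 0 with hsg | hsg | hsg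
    · exfalso
      have hpos : ∀ b ∈ B, 0 < dmat a₁ a₀ b := fun b hb => by
        nlinarith [hsame a₁ ha₁ h01 b hb, dmat_swap a₀ a₁ b]
      have := dmat_pos_hull hxB hpos
      nlinarith [dmat_swap a₀ a₁ x]
    · exfalso; nlinarith [hsame a₁ ha₁ h01 b₀ hb₀]
    · exact fun b hb => by nlinarith [hsame a₁ ha₁ h01 b hb]
  have hb2 : ∀ b ∈ B, 0 < dmat a₂ a₀ b := by
    rcases lt_trichotomy (dmat a₀ a₂ b₀) 0 with hsg | hsg | hsg
    · exact fun b hb => by nlinarith [hsame a₂ ha₂ h02 b hb, dmat_swap a₀ a₂ b]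
    · exfalso; nlinarith [hsame a₂ ha₂ h02 b₀ hb₀]
    · exfalso
      have hpos : ∀ b ∈ B, 0 < dmat a₀ a₂ b := fun b hb => by
        nlinarith [hsame a₂ ha₂ h02 b hb]
      have := dmat_pos_hull hxB hpos
      nlinarith [dmat_swap a₀ a₂ x]
  have hb3 : ∀ b ∈ B, dmat a₁ a₂ b < 0 := by
    intro b hb
    by_contra hc
    push_neg at hc
    have hmem : b ∈ convexHull ℝ ({a₀, a₁, a₂} : Set Plane) :=
      mem_hull3_of_dmat hσ hc (hb2 b hb).le (hb1 b hb).le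
    have hnb : b ∉ A := Finset.disjoint_right.mp hAB hb
    refine hP b (hB hb) (convexHull_mono ?_ hmem)
    intro z hz
    rcases hz with rfl | hz
    · exact mem_diff_hull (hA ha₀) (fun h => hnb (h ▸ ha₀))
    rcases hz with rfl | hz
    · exact mem_diff_hull (hA ha₁) (fun h => hnb (h ▸ ha₁))
    have hz' : z = a₂ := hz
    subst hz'
    exact mem_diff_hull (hA ha₂) (fun h => hnb (h ▸ ha₂))
  have hneg : ∀ b ∈ B, 0 < dmat a₂ a₁ b := fun b hb => by
    nlinarith [hb3 b hb, dmat_swap a₁ a₂ b]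
  have := dmat_pos_hull hxB hneg
  nlinarith [dmat_swap a₁ a₂ x]

/-- If `A, B` are disjoint nonempty subsets of a finite set `P` of points in convex
position, `a₀ ∈ A`, `b₀ ∈ B`, and `A` and `B` are not line-separable, then there are
`a ∈ A` and `b ∈ B` such that the closed segments `[a₀, a]` and `[b₀, b]` intersect. -/
theorem not_line_separable_segments_cross
    (P : Finset Plane) (hP : ConvexPos P)
    (A B : Finset Plane) (hA : A ⊆ P) (hB : B ⊆ P) (hAB : Disjoint A B)
    (a₀ : Plane) (ha₀ : a₀ ∈ A) (b₀ : Plane) (hb₀ : b₀ ∈ B)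
    (hsep : ¬ LineSep (A : Set Plane) (B : Set Plane)) :
    ∃ a ∈ A, ∃ b ∈ B, (segment ℝ a₀ a ∩ segment ℝ b₀ b).Nonempty := by
  classical
  by_contra hcon
  have hcross : ∀ a ∈ A, ∀ b ∈ B, ¬ (segment ℝ a₀ a ∩ segment ℝ b₀ b).Nonempty := by
    intro a ha b hb h
    exact hcon ⟨a, ha, b, hb, h⟩
  have hnotinB : ∀ a ∈ A, a ∉ B := fun a ha => Finset.disjoint_left.mp hAB ha
  -- Step 1: the convex hulls intersect (else Hahn-Banach separates them).
  have hint : (convexHull ℝ (A : Set Plane) ∩ convexHull ℝ (B : Set Plane)).Nonempty := by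
    rcases Set.eq_empty_or_nonempty
      (convexHull ℝ (A : Set Plane) ∩ convexHull ℝ (B : Set Plane)) with he | h
    · exfalso
      apply hsep
      have hdisj : Disjoint (convexHull ℝ (A : Set Plane)) (convexHull ℝ (B : Set Plane)) :=
        Set.disjoint_iff_inter_eq_empty.mpr he
      obtain ⟨f, u, v, hfu, huv, hfv⟩ := geometric_hahn_banach_compact_closed
        (convex_convexHull ℝ _) (A.finite_toSet.isCompact_convexHull (𝕜 := ℝ))
        (convex_convexHull ℝ _) ((B.finite_toSet.isCompact_convexHull (𝕜 := ℝ)).isClosed) hdisj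
      refine ⟨f.toLinearMap, ?_, u, ?_, ?_⟩
      · intro h0
        have h₁ := hfu a₀ (subset_convexHull ℝ _ (Finset.mem_coe.mpr ha₀))
        have h₂ := hfv b₀ (subset_convexHull ℝ _ (Finset.mem_coe.mpr hb₀))
        have e1 : f a₀ = 0 := by
          have := LinearMap.ext_iff.mp h0 a₀; simpa using this
        have e2 : f b₀ = 0 := by
          have := LinearMap.ext_iff.mp h0 b₀; simpa using this
        rw [e1] at h₁; rw [e2] at h₂; linarith
      · exact fun a ha => (hfu a (subset_convexHull ℝ _ ha)).le
      · exact fun b hb => (huv.trans (hfv b (subset_convexHull ℝ _ hb))).le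
    · exact h
  obtain ⟨x, hxA, hxB⟩ := hint
  -- Step 2: by non-crossing, for every `a ∈ A`, all of `B` is strictly on one side
  -- of the line through `a₀, a`.
  have hsame : ∀ a ∈ A, a ≠ a₀ → ∀ b ∈ B, 0 < dmat a₀ a b₀ * dmat a₀ a b := by
    intro a ha hane b hb
    have hne1 : a₀ ≠ b₀ := fun h => (hnotinB a₀ ha₀) (h ▸ hb₀)
    have hne2 : a₀ ≠ b := fun h => (hnotinB a₀ ha₀) (h ▸ hb)
    have hne3 : a ≠ b₀ := fun h => (hnotinB a ha) (h ▸ hb₀)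
    have hne4 : a ≠ b := fun h => (hnotinB a ha) (h ▸ hb)
    have hd1 : dmat a₀ a b₀ ≠ 0 :=
      dmat_ne_zero hP (hA ha₀) (hA ha) (hB hb₀) (Ne.symm hane) hne1 hne3
    have hd2 : dmat a₀ a b ≠ 0 :=
      dmat_ne_zero hP (hA ha₀) (hA ha) (hB hb) (Ne.symm hane) hne2 hne4
    rcases lt_trichotomy (dmat a₀ a b₀ * dmat a₀ a b) 0 with h | h | h
    · exact absurd (segs_cross hP (hA ha₀) (hA ha) (hB hb₀) (hB hb) h) (hcross a ha b hb)
    · rcases mul_eq_zero.mp h with h' | h'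
      exacts [absurd h' hd1, absurd h' hd2]
    · exact h
  -- Step 3: fan decomposition of the hull of `A` with apex `a₀`.
  obtain ⟨a₁, ha₁, a₂, ha₂, hxT⟩ := fan hP hA ha₀ hxA
  by_cases h1 : a₁ = a₀
  · subst h1
    apply no_seg_case hP hA hB hAB ha₀ ha₂ hb₀ hsame hxB
    rw [show ({a₁, a₁, a₂} : Set Plane) = {a₁, a₂} by simp] at hxT
    rwa [convexHull_pair] at hxT
  by_cases h2 : a₂ = a₀
  · subst h2
    apply no_seg_case hP hA hB hAB ha₀ ha₁ hb₀ hsame hxB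
    rw [show ({a₂, a₁, a₂} : Set Plane) = {a₂, a₁} by
      ext z; simp only [Set.mem_insert_iff, Set.mem_singleton_iff]; tauto] at hxT
    rwa [convexHull_pair] at hxT
  by_cases h12 : a₁ = a₂
  · subst h12
    apply no_seg_case hP hA hB hAB ha₀ ha₁ hb₀ hsame hxB
    rw [show ({a₀, a₁, a₁} : Set Plane) = {a₀, a₁} by simp] at hxT
    rwa [convexHull_pair] at hxT
  have hσne : dmat a₀ a₁ a₂ ≠ 0 :=
    dmat_ne_zero hP (hA ha₀) (hA ha₁) (hA ha₂) (Ne.symm h1) (Ne.symm h2) h12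
  rcases hσne.lt_or_gt with hneg | hpos
  · have hσ' : 0 < dmat a₀ a₂ a₁ := by
      have := dmat_swap23 a₀ a₁ a₂
      linarith
    have hxT' : x ∈ convexHull ℝ ({a₀, a₂, a₁} : Set Plane) := by
      rw [Set.pair_comm a₂ a₁]
      exact hxT
    exact main_case hP hA hB hAB ha₀ ha₂ ha₁ hb₀ h2 h1 hσ' hsame hxB hxT'
  · exact main_case hP hA hB hAB ha₀ ha₁ ha₂ hb₀ h1 h2 hpos hsame hxB hxT
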